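/- If the signed graph of the system is structurally balanced, i.e., every semi-cycle has positive sign, then the controllability matrix is sign definite: for every pair (A',B') with the same sign pattern as (A,B) and for all i in {1,...,n}, d in {1,...,n}, j in {1,...,m}, sgn((A'^{d-1} B')_{i,j}) = sgn((A^{d-1} B)_{i,j}). -/

import Mathlib

lemma rsign_mul (x y : ℝ) : Real.sign (x * y) = Real.sign x * Real.sign y := by
  rcases lt_trichotomy x 0 with hx|hx|hx
  · rcases lt_trichotomy y 0 with hy|hy|hy
    · rw [Real.sign_of_pos (mul_pos_of_neg_of_neg hx hy), Real.sign_of_neg hx,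
        Real.sign_of_neg hy]; ring
    · subst hy; simp [Real.sign_zero]
    · rw [Real.sign_of_neg (mul_neg_of_neg_of_pos hx hy), Real.sign_of_neg hx,
        Real.sign_of_pos hy]; ring
  · subst hx; simp [Real.sign_zero]
  · rcases lt_trichotomy y 0 with hy|hy|hy
    · rw [Real.sign_of_neg (mul_neg_of_pos_of_neg hx hy), Real.sign_of_pos hx,
        Real.sign_of_neg hy]; ring
    · subst hy; simp [Real.sign_zero]
    · rw [Real.sign_of_pos (mul_pos hx hy), Real.sign_of_pos hx, Real.sign_of_pos hy]; ring

lemma rsign_prod {ι : Type*} (s : Finset ι) (f : ι → ℝ) :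
    Real.sign (∏ x ∈ s, f x) = ∏ x ∈ s, Real.sign (f x) := by
  classical
  induction s using Finset.cons_induction with
  | empty => simp [Real.sign_one]
  | cons a s ha ih => rw [Finset.prod_cons, Finset.prod_cons, rsign_mul, ih]

lemma fin_fun_congr {α : Sort*} {N : ℕ} (f : Fin N → α) {a b : ℕ} (h : a = b) (ha : a < N)
    (hb : b < N) : f ⟨a, ha⟩ = f ⟨b, hb⟩ := by subst h; rfl

lemma pos_of_rsign_one {r : ℝ} (h : Real.sign r = 1) : 0 < r := by
  rcases lt_trichotomy r 0 with hr|hr|hr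
  · rw [Real.sign_of_neg hr] at h; norm_num at h
  · subst hr; rw [Real.sign_zero] at h; norm_num at h
  · exact hr

lemma neg_of_rsign_neg_one {r : ℝ} (h : Real.sign r = -1) : r < 0 := by
  rcases lt_trichotomy r 0 with hr|hr|hr
  · exact hr
  · subst hr; rw [Real.sign_zero] at h; norm_num at h
  · rw [Real.sign_of_pos hr] at h; norm_num at h

lemma sign_sum_eq {ι : Type*} [Fintype ι] (f : ι → ℝ) (s : ℝ) (hs : s = 1 ∨ s = -1)
    (h : ∀ x, f x = 0 ∨ Real.sign (f x) = s) (x0 : ι) (hx0 : f x0 ≠ 0) :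
    Real.sign (∑ x, f x) = s := by
  have hx0' : Real.sign (f x0) = s := (h x0).resolve_left hx0
  rcases hs with hs|hs
  · subst hs
    have hnn : ∀ x ∈ Finset.univ, 0 ≤ f x := by
      intro x _
      rcases h x with h'|h'
      · rw [h']
      · exact (pos_of_rsign_one h').le
    exact Real.sign_of_pos (Finset.sum_pos' hnn ⟨x0, Finset.mem_univ _,
      pos_of_rsign_one hx0'⟩)
  · subst hs
    have hnn : ∀ x ∈ Finset.univ, 0 ≤ -f x := by
      intro x _
      rcases h x with h'|h'
      · rw [h']; norm_num
      · linarith [neg_of_rsign_neg_one h']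
    have : 0 < ∑ x, -f x := Finset.sum_pos' hnn ⟨x0, Finset.mem_univ _, by
      linarith [neg_of_rsign_neg_one hx0']⟩
    rw [Finset.sum_neg_distrib] at this
    exact Real.sign_of_neg (by linarith)

/-- `k` is a walk of length `e + 1` from input `j` to state `i`: it visits the states
`k 0, k 1, …, k e`, ends at `i`, starts along a nonzero entry of `B`, and follows
nonzero entries of `A`. -/
def IsWalk {n m : ℕ} (A : Matrix (Fin n) (Fin n) ℝ) (B : Matrix (Fin n) (Fin m) ℝ)
    (j : Fin m) (i : Fin n) {e : ℕ} (k : Fin (e + 1) → Fin n) : Prop :=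
  k (Fin.last e) = i ∧ B (k 0) j ≠ 0 ∧ ∀ t : Fin e, A (k t.succ) (k t.castSucc) ≠ 0

/-- The weight of the walk `k 0, …, k e` from input `j`:
`B (k 0) j * ∏ₜ A (k (t+1)) (k t)`. -/
def walkWeight {n m : ℕ} (A : Matrix (Fin n) (Fin n) ℝ) (B : Matrix (Fin n) (Fin m) ℝ)
    (j : Fin m) {e : ℕ} (k : Fin (e + 1) → Fin n) : ℝ :=
  B (k 0) j * ∏ t : Fin e, A (k t.succ) (k t.castSucc)

open Classical in
/-- `rho A B j i d` is the sum of the weights of all walks of length `d` from input `j`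
to state `i` (zero if there are none, in particular for `d = 0`). -/
noncomputable def rho {n m : ℕ} (A : Matrix (Fin n) (Fin n) ℝ) (B : Matrix (Fin n) (Fin m) ℝ)
    (j : Fin m) (i : Fin n) : ℕ → ℝ
  | 0 => 0
  | e + 1 => ∑ k : Fin (e + 1) → Fin n,
      if IsWalk A B j i k then walkWeight A B j k else 0

/-- `Pset A B j d` is the set of states reachable from input `j` by at least one walk of
length `d` of positive weight. -/
def Pset {n m : ℕ} (A : Matrix (Fin n) (Fin n) ℝ) (B : Matrix (Fin n) (Fin m) ℝ)
    (j : Fin m) : ℕ → Set (Fin n)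
  | 0 => ∅
  | e + 1 => {i | ∃ k : Fin (e + 1) → Fin n, IsWalk A B j i k ∧ 0 < walkWeight A B j k}

/-- `Nset A B j d` is the set of states reachable from input `j` by at least one walk of
length `d` of negative weight. -/
def Nset {n m : ℕ} (A : Matrix (Fin n) (Fin n) ℝ) (B : Matrix (Fin n) (Fin m) ℝ)
    (j : Fin m) : ℕ → Set (Fin n)
  | 0 => ∅
  | e + 1 => {i | ∃ k : Fin (e + 1) → Fin n, IsWalk A B j i k ∧ walkWeight A B j k < 0}

/-- `(A', B')` has the same sign pattern as `(A, B)`. -/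
def SamePattern {n m : ℕ} (A A' : Matrix (Fin n) (Fin n) ℝ)
    (B B' : Matrix (Fin n) (Fin m) ℝ) : Prop :=
  (∀ p q, Real.sign (A' p q) = Real.sign (A p q)) ∧
    (∀ p q, Real.sign (B' p q) = Real.sign (B p q))

/-- The directed edges of the signed graph of the system: `x_p → x_q` when `A q p ≠ 0`
and `u_j → x_q` when `B q j ≠ 0`. -/
def EdgeExists {n m : ℕ} (A : Matrix (Fin n) (Fin n) ℝ) (B : Matrix (Fin n) (Fin m) ℝ) :
    (Fin n ⊕ Fin m) → (Fin n ⊕ Fin m) → Prop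
  | Sum.inl p, Sum.inl q => A q p ≠ 0
  | Sum.inr j, Sum.inl q => B q j ≠ 0
  | _, _ => False

/-- The sign of an edge of the signed graph of the system. -/
noncomputable def edgeSign {n m : ℕ} (A : Matrix (Fin n) (Fin n) ℝ)
    (B : Matrix (Fin n) (Fin m) ℝ) :
    (Fin n ⊕ Fin m) → (Fin n ⊕ Fin m) → ℝ
  | Sum.inl p, Sum.inl q => Real.sign (A q p)
  | Sum.inr j, Sum.inl q => Real.sign (B q j)
  | _, _ => 0

/-- The signed graph of the system is structurally balanced: every semi-cycle (a closed
vertex sequence `v 0, …, v c = v 0`, each consecutive pair joined by an existing edge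
traversed either forwards or backwards, as recorded by `dir`) has sign `+1`. -/
def StructurallyBalanced {n m : ℕ} (A : Matrix (Fin n) (Fin n) ℝ)
    (B : Matrix (Fin n) (Fin m) ℝ) : Prop :=
  ∀ (c : ℕ), 1 ≤ c → ∀ v : Fin (c + 1) → (Fin n ⊕ Fin m), v (Fin.last c) = v 0 →
    ∀ dir : Fin c → Bool,
      (∀ t : Fin c, if dir t then EdgeExists A B (v t.castSucc) (v t.succ)
        else EdgeExists A B (v t.succ) (v t.castSucc)) →
      (∏ t : Fin c, if dir t then edgeSign A B (v t.castSucc) (v t.succ)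
        else edgeSign A B (v t.succ) (v t.castSucc)) = 1


section Splice

variable {n m : ℕ} (A : Matrix (Fin n) (Fin n) ℝ) (B : Matrix (Fin n) (Fin m) ℝ)

lemma walk_B {j : Fin m} {i : Fin n} {e : ℕ} {k : Fin (e + 1) → Fin n}
    (hk : IsWalk A B j i k) (h0 : 0 < e + 1) : B (k ⟨0, h0⟩) j ≠ 0 := by
  have := hk.2.1
  rwa [show (0 : Fin (e+1)) = ⟨0, h0⟩ from (Fin.mk_zero).symm] at this

lemma walk_A {j : Fin m} {i : Fin n} {e : ℕ} {k : Fin (e + 1) → Fin n}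
    (hk : IsWalk A B j i k) (a : ℕ) (ha : a < e) (h1 : a + 1 < e + 1) (h2 : a < e + 1) :
    A (k ⟨a + 1, h1⟩) (k ⟨a, h2⟩) ≠ 0 := hk.2.2 ⟨a, ha⟩

lemma walk_last {j : Fin m} {i : Fin n} {e : ℕ} {k : Fin (e + 1) → Fin n}
    (hk : IsWalk A B j i k) (h : e < e + 1) : k ⟨e, h⟩ = i := hk.1

lemma walkWeight_ne_zero {j : Fin m} {i : Fin n} {e : ℕ} {k : Fin (e + 1) → Fin n}
    (hk : IsWalk A B j i k) : walkWeight A B j k ≠ 0 :=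
  mul_ne_zero hk.2.1 (Finset.prod_ne_zero_iff.2 fun t _ => hk.2.2 t)

/-- The vertex sequence of the semi-cycle obtained from two walks `k`, `k'`. -/
def spliceV (j : Fin m) {e e' : ℕ} (k : Fin (e + 1) → Fin n) (k' : Fin (e' + 1) → Fin n)
    (s : ℕ) : Fin n ⊕ Fin m :=
  if s = 0 then Sum.inr j
  else if h : s ≤ e + 1 then Sum.inl (k ⟨s - 1, by omega⟩)
  else if h2 : s ≤ e + e' + 1 then Sum.inl (k' ⟨e + e' + 1 - s, by omega⟩)
  else Sum.inr j

variable {j : Fin m} {e e' : ℕ} {k : Fin (e + 1) → Fin n} {k' : Fin (e' + 1) → Fin n}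

lemma spliceV_zero : spliceV j k k' 0 = Sum.inr j := if_pos rfl

lemma spliceV_low {s : ℕ} (h1 : 1 ≤ s) (h2 : s ≤ e + 1) :
    spliceV j k k' s = Sum.inl (k ⟨s - 1, by omega⟩) := by
  unfold spliceV
  rw [if_neg (by omega), dif_pos h2]

lemma spliceV_end {s : ℕ} (h : e + e' + 1 < s) : spliceV j k k' s = Sum.inr j := by
  unfold spliceV
  rw [if_neg (by omega), dif_neg (by omega), dif_neg (by omega)]

lemma spliceV_mid {i : Fin n} (hk : IsWalk A B j i k) (hk' : IsWalk A B j i k')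
    {s : ℕ} (h1 : e + 1 ≤ s) (h2 : s ≤ e + e' + 1) :
    spliceV j k k' s = Sum.inl (k' ⟨e + e' + 1 - s, by omega⟩) := by
  rcases eq_or_lt_of_le h1 with h|h
  · rw [spliceV_low (by omega) (by omega)]
    congr 1
    rw [fin_fun_congr k (by omega) (by omega) (e.lt_succ_self), walk_last A B hk,
      ← walk_last A B hk' (e'.lt_succ_self)]
    exact fin_fun_congr k' (by omega) _ _
  · unfold spliceV
    rw [if_neg (by omega), dif_neg (by omega), dif_pos h2]

end Splice

section Splice2

variable {n m : ℕ} {A : Matrix (Fin n) (Fin n) ℝ} {B : Matrix (Fin n) (Fin m) ℝ}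
variable {j : Fin m} {i : Fin n} {e e' : ℕ} {k : Fin (e + 1) → Fin n} {k' : Fin (e' + 1) → Fin n}

lemma splice_edges (hk : IsWalk A B j i k) (hk' : IsWalk A B j i k') :
    ∀ t : Fin (e + e' + 2),
      if (fun t : Fin (e + e' + 2) => decide (t.val ≤ e)) t then
        EdgeExists A B ((fun t : Fin (e + e' + 3) => spliceV j k k' t.val) t.castSucc)
          ((fun t : Fin (e + e' + 3) => spliceV j k k' t.val) t.succ)
      else
        EdgeExists A B ((fun t : Fin (e + e' + 3) => spliceV j k k' t.val) t.succ)
          ((fun t : Fin (e + e' + 3) => spliceV j k k' t.val) t.castSucc) := by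
  intro t
  by_cases ht : t.val ≤ e
  · rw [if_pos (by simpa using ht)]
    show EdgeExists A B (spliceV j k k' t.val) (spliceV j k k' (t.val + 1))
    rcases Nat.eq_zero_or_pos t.val with h0 | h0
    · rw [h0, spliceV_zero, spliceV_low (by omega) (by omega)]
      show B (k ⟨0 + 1 - 1, _⟩) j ≠ 0
      rw [fin_fun_congr k (show 0 + 1 - 1 = 0 by omega) (by omega) (by omega)]
      exact walk_B A B hk _
    · obtain ⟨τ, hτ⟩ : ∃ τ, t.val = τ + 1 := ⟨t.val - 1, by omega⟩
      rw [hτ, spliceV_low (by omega) (by omega), spliceV_low (by omega) (by omega)]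
      show A (k ⟨τ + 1 + 1 - 1, _⟩) (k ⟨τ + 1 - 1, _⟩) ≠ 0
      rw [fin_fun_congr k (show τ + 1 + 1 - 1 = τ + 1 by omega) (by omega) (by omega),
        fin_fun_congr k (show τ + 1 - 1 = τ by omega) (by omega) (by omega)]
      exact walk_A A B hk τ (by omega) _ _
  · rw [if_neg (by simpa using ht)]
    show EdgeExists A B (spliceV j k k' (t.val + 1)) (spliceV j k k' t.val)
    have htc : t.val ≤ e + e' + 1 := by omega
    by_cases hlast : t.val = e + e' + 1
    · rw [hlast, spliceV_end (by omega), spliceV_mid A B hk hk' (s := e + e' + 1) (by omega) (by omega)]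
      show B (k' ⟨e + e' + 1 - (e + e' + 1), _⟩) j ≠ 0
      rw [fin_fun_congr k' (show e + e' + 1 - (e + e' + 1) = 0 by omega) (by omega) (by omega)]
      exact walk_B A B hk' _
    · rw [spliceV_mid A B hk hk' (s := t.val + 1) (by omega) (by omega),
        spliceV_mid A B hk hk' (s := t.val) (by omega) (by omega)]
      show A (k' ⟨e + e' + 1 - t.val, _⟩) (k' ⟨e + e' + 1 - (t.val + 1), _⟩) ≠ 0
      set σ : ℕ := e + e' - t.val with hσ
      rw [fin_fun_congr k' (show e + e' + 1 - t.val = σ + 1 by omega) (by omega) (by omega),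
        fin_fun_congr k' (show e + e' + 1 - (t.val + 1) = σ by omega) (by omega) (by omega)]
      exact walk_A A B hk' σ (by omega) _ _

end Splice2

section Splice3

variable {n m : ℕ} (A : Matrix (Fin n) (Fin n) ℝ) (B : Matrix (Fin n) (Fin m) ℝ)

/-- The edge-sign sequence of the semi-cycle. -/
noncomputable def spliceG (j : Fin m) {e e' : ℕ} (k : Fin (e + 1) → Fin n)
    (k' : Fin (e' + 1) → Fin n) (τ : ℕ) : ℝ :=
  if τ ≤ e then edgeSign A B (spliceV j k k' τ) (spliceV j k k' (τ + 1))
  else edgeSign A B (spliceV j k k' (τ + 1)) (spliceV j k k' τ)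

/-- Totalized edge signs of a walk. -/
noncomputable def walkF {e : ℕ} (k : Fin (e + 1) → Fin n) (τ : ℕ) : ℝ :=
  if h : τ < e then Real.sign (A (k ⟨τ + 1, by omega⟩) (k ⟨τ, by omega⟩)) else 1

variable {j : Fin m} {i : Fin n} {e e' : ℕ} {k : Fin (e + 1) → Fin n} {k' : Fin (e' + 1) → Fin n}

lemma sign_walkWeight_eq :
    Real.sign (walkWeight A B j k) =
      (∏ τ ∈ Finset.range e, walkF A k τ) * Real.sign (B (k 0) j) := by
  unfold walkWeight
  rw [rsign_mul, mul_comm]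
  congr 1
  rw [← Fin.prod_univ_eq_prod_range (walkF A k) e, rsign_prod]
  refine Finset.prod_congr rfl fun t _ => ?_
  unfold walkF
  rw [dif_pos t.isLt]
  rfl

lemma splice_prod_low :
    ∏ τ ∈ Finset.range (e + 1), spliceG A B j k k' τ = Real.sign (walkWeight A B j k) := by
  rw [Finset.prod_range_succ', sign_walkWeight_eq]
  congr 1
  · refine Finset.prod_congr rfl fun τ hτ => ?_
    have hτ : τ < e := Finset.mem_range.1 hτ
    unfold spliceG
    rw [if_pos (by omega), spliceV_low (by omega) (by omega),
      spliceV_low (by omega) (by omega)]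
    show Real.sign (A (k ⟨τ + 1 + 1 - 1, _⟩) (k ⟨τ + 1 - 1, _⟩)) = walkF A k τ
    unfold walkF
    rw [dif_pos hτ, fin_fun_congr k (show τ + 1 + 1 - 1 = τ + 1 by omega) (by omega) (by omega),
      fin_fun_congr k (show τ + 1 - 1 = τ by omega) (by omega) (by omega)]

lemma splice_prod_high (hk : IsWalk A B j i k) (hk' : IsWalk A B j i k') :
    ∏ τ ∈ Finset.range (e' + 1), spliceG A B j k k' (e + 1 + τ) =
      Real.sign (walkWeight A B j k') := by
  rw [Finset.prod_range_succ, sign_walkWeight_eq]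
  congr 1
  · rw [← Finset.prod_range_reflect (walkF A k') e']
    refine Finset.prod_congr rfl fun τ hτ => ?_
    have hτ : τ < e' := Finset.mem_range.1 hτ
    unfold spliceG
    rw [if_neg (by omega), show e + 1 + τ + 1 = e + 2 + τ by omega,
      spliceV_mid A B hk hk' (s := e + 2 + τ) (by omega) (by omega),
      spliceV_mid A B hk hk' (s := e + 1 + τ) (by omega) (by omega)]
    show Real.sign (A (k' ⟨e + e' + 1 - (e + 1 + τ), _⟩) (k' ⟨e + e' + 1 - (e + 2 + τ), _⟩)) =
      walkF A k' (e' - 1 - τ)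
    unfold walkF
    rw [dif_pos (by omega),
      fin_fun_congr k' (show e + e' + 1 - (e + 1 + τ) = e' - 1 - τ + 1 by omega)
        (by omega) (by omega),
      fin_fun_congr k' (show e + e' + 1 - (e + 2 + τ) = e' - 1 - τ by omega)
        (by omega) (by omega)]
  · unfold spliceG
    rw [if_neg (by omega), show e + 1 + e' + 1 = e + e' + 2 by omega, spliceV_end (by omega),
      spliceV_mid A B hk hk' (s := e + 1 + e') (by omega) (by omega)]
    show Real.sign (B (k' ⟨e + e' + 1 - (e + 1 + e'), _⟩) j) = _
    rw [fin_fun_congr k' (show e + e' + 1 - (e + 1 + e') = 0 by omega) (by omega) (by omega),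
      Fin.mk_zero]

lemma walk_sign_eq (hbal : StructurallyBalanced A B) (hk : IsWalk A B j i k)
    (hk' : IsWalk A B j i k') :
    Real.sign (walkWeight A B j k) = Real.sign (walkWeight A B j k') := by
  have hclose : (fun t : Fin (e + e' + 2 + 1) => spliceV j k k' t.val) (Fin.last (e + e' + 2))
      = (fun t : Fin (e + e' + 2 + 1) => spliceV j k k' t.val) 0 := by
    show spliceV j k k' (e + e' + 2) = spliceV j k k' ((0 : Fin (e + e' + 2 + 1)) : ℕ)
    rw [Fin.val_zero, spliceV_end (by omega), spliceV_zero]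
  have hprod := hbal (e + e' + 2) (by omega)
    (fun t : Fin (e + e' + 2 + 1) => spliceV j k k' t.val) hclose
    (fun t : Fin (e + e' + 2) => decide (t.val ≤ e)) (splice_edges hk hk')
  have h1 : (∏ t : Fin (e + e' + 2),
      if (fun t : Fin (e + e' + 2) => decide (t.val ≤ e)) t then
        edgeSign A B ((fun t : Fin (e + e' + 2 + 1) => spliceV j k k' t.val) t.castSucc)
          ((fun t : Fin (e + e' + 2 + 1) => spliceV j k k' t.val) t.succ)
      else
        edgeSign A B ((fun t : Fin (e + e' + 2 + 1) => spliceV j k k' t.val) t.succ)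
          ((fun t : Fin (e + e' + 2 + 1) => spliceV j k k' t.val) t.castSucc)) =
      ∏ τ ∈ Finset.range (e + e' + 2), spliceG A B j k k' τ := by
    rw [← Fin.prod_univ_eq_prod_range (spliceG A B j k k') (e + e' + 2)]
    refine Finset.prod_congr rfl fun t _ => ?_
    by_cases h : t.val ≤ e
    · rw [if_pos (by simpa using h)]
      unfold spliceG
      rw [if_pos h]
      rfl
    · rw [if_neg (by simpa using h)]
      unfold spliceG
      rw [if_neg h]
      rfl
  rw [h1, show e + e' + 2 = (e + 1) + (e' + 1) by omega, Finset.prod_range_add,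
    splice_prod_low, splice_prod_high A B hk hk'] at hprod
  have hw := Real.sign_apply_eq_of_ne_zero _ (walkWeight_ne_zero A B hk)
  have hw' := Real.sign_apply_eq_of_ne_zero _ (walkWeight_ne_zero A B hk')
  rcases hw with h|h <;> rcases hw' with h'|h' <;> rw [h, h'] at hprod ⊢ <;>
    norm_num at hprod

end Splice3

section Entry

variable {n m : ℕ} (A : Matrix (Fin n) (Fin n) ℝ) (B : Matrix (Fin n) (Fin m) ℝ) (j : Fin m)

lemma entry_eq' (e : ℕ) (i : Fin n) : (A ^ e * B) i j =
    ∑ k : Fin (e + 1) → Fin n, if k (Fin.last e) = i then walkWeight A B j k else 0 := by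
  induction e generalizing i with
  | zero =>
    rw [pow_zero, Matrix.one_mul,
      ← Equiv.sum_comp (Equiv.funUnique (Fin 1) (Fin n)).symm
        (fun k : Fin 1 → Fin n => if k (Fin.last 0) = i then walkWeight A B j k else 0)]
    have h : ∀ x : Fin n,
        (if (Equiv.funUnique (Fin 1) (Fin n)).symm x (Fin.last 0) = i then
          walkWeight A B j ((Equiv.funUnique (Fin 1) (Fin n)).symm x) else 0) =
        if x = i then B x j else 0 := by
      intro x
      simp [walkWeight, Equiv.funUnique]
    rw [Finset.sum_congr rfl fun x _ => h x, Finset.sum_ite_eq' Finset.univ i fun x => B x j]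
    simp
  | succ e ih =>
    have hsnoc : ∀ (k₀ : Fin (e + 1) → Fin n) (x : Fin n),
        walkWeight A B j (Fin.snoc k₀ x : Fin (e + 1 + 1) → Fin n) =
          A x (k₀ (Fin.last e)) * walkWeight A B j k₀ := by
      intro k₀ x
      unfold walkWeight
      have h0 : (Fin.snoc k₀ x : Fin (e + 1 + 1) → Fin n) 0 = k₀ 0 := by
        rw [show (0 : Fin (e + 1 + 1)) = Fin.castSucc 0 from (Fin.castSucc_zero).symm,
          Fin.snoc_castSucc]
      rw [h0, Fin.prod_univ_castSucc]
      simp only [Fin.succ_castSucc, Fin.snoc_castSucc, Fin.succ_last, Fin.snoc_last]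
      ring
    calc (A ^ (e + 1) * B) i j = ∑ p, A i p * (A ^ e * B) p j := by
          rw [pow_succ', Matrix.mul_assoc, Matrix.mul_apply]
      _ = ∑ p, ∑ k₀ : Fin (e + 1) → Fin n,
            if k₀ (Fin.last e) = p then A i p * walkWeight A B j k₀ else 0 := by
          refine Finset.sum_congr rfl fun p _ => ?_
          rw [ih p, Finset.mul_sum]
          exact Finset.sum_congr rfl fun k₀ _ => by rw [mul_ite, mul_zero]
      _ = ∑ k₀ : Fin (e + 1) → Fin n, ∑ p,
            if k₀ (Fin.last e) = p then A i p * walkWeight A B j k₀ else 0 :=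
          Finset.sum_comm
      _ = ∑ k₀ : Fin (e + 1) → Fin n, A i (k₀ (Fin.last e)) * walkWeight A B j k₀ := by
          refine Finset.sum_congr rfl fun k₀ _ => ?_
          rw [Finset.sum_ite_eq Finset.univ (k₀ (Fin.last e))
            (fun p => A i p * walkWeight A B j k₀)]
          simp
      _ = ∑ pk : (Fin (e + 1) → Fin n) × Fin n,
            if (Fin.snoc pk.1 pk.2 : Fin (e + 1 + 1) → Fin n) (Fin.last (e + 1)) = i then
              walkWeight A B j (Fin.snoc pk.1 pk.2 : Fin (e + 1 + 1) → Fin n) else 0 := by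
          rw [Fintype.sum_prod_type]
          refine Finset.sum_congr rfl fun k₀ _ => ?_
          simp only [Fin.snoc_last, hsnoc]
          rw [Finset.sum_ite_eq' Finset.univ i fun x => A x (k₀ (Fin.last e)) * walkWeight A B j k₀]
          simp
      _ = ∑ k : Fin (e + 1 + 1) → Fin n,
            if k (Fin.last (e + 1)) = i then walkWeight A B j k else 0 :=
          Fintype.sum_equiv
            (⟨fun p => Fin.snoc p.1 p.2, fun f => (Fin.init f, f (Fin.last _)),
              fun p => by simp, fun f => by simp⟩ :
              ((Fin (e + 1) → Fin n) × Fin n) ≃ (Fin (e + 1 + 1) → Fin n)) _ _ fun pk => rfl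

open Classical in
lemma entry_eq (e : ℕ) (i : Fin n) : (A ^ e * B) i j =
    ∑ k : Fin (e + 1) → Fin n, if IsWalk A B j i k then walkWeight A B j k else 0 := by
  rw [entry_eq']
  refine Finset.sum_congr rfl fun k _ => ?_
  by_cases hw : IsWalk A B j i k
  · rw [if_pos hw.1, if_pos hw]
  · rw [if_neg hw]
    by_cases hl : k (Fin.last e) = i
    · rw [if_pos hl]
      by_cases hB : B (k 0) j = 0
      · unfold walkWeight
        rw [hB, zero_mul]
      · have h : ¬ ∀ t : Fin e, A (k t.succ) (k t.castSucc) ≠ 0 := fun hA => hw ⟨hl, hB, hA⟩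
        push_neg at h
        obtain ⟨t, hA⟩ := h
        unfold walkWeight
        rw [Finset.prod_eq_zero (Finset.mem_univ t) hA, mul_zero]
    · rw [if_neg hl]

end Entry

section Pattern

variable {n m : ℕ} {A A' : Matrix (Fin n) (Fin n) ℝ} {B B' : Matrix (Fin n) (Fin m) ℝ}
variable {j : Fin m} {i : Fin n} {e : ℕ} {k : Fin (e + 1) → Fin n}

lemma ne_iff_of_sign_eq {x y : ℝ} (h : Real.sign x = Real.sign y) : x ≠ 0 ↔ y ≠ 0 :=
  not_congr (Real.sign_eq_zero_iff.symm.trans (by rw [h, Real.sign_eq_zero_iff]))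

lemma samePattern_isWalk (hp : SamePattern A A' B B') :
    IsWalk A' B' j i k ↔ IsWalk A B j i k := by
  unfold IsWalk
  exact and_congr Iff.rfl (and_congr (ne_iff_of_sign_eq (hp.2 _ _))
    (forall_congr' fun t => ne_iff_of_sign_eq (hp.1 _ _)))

lemma samePattern_weight (hp : SamePattern A A' B B') :
    Real.sign (walkWeight A' B' j k) = Real.sign (walkWeight A B j k) := by
  unfold walkWeight
  rw [rsign_mul, rsign_mul, rsign_prod, rsign_prod, hp.2]
  congr 1
  exact Finset.prod_congr rfl fun t _ => hp.1 _ _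

end Pattern

/-- If the signed graph of the system is structurally balanced, then the controllability
matrix is sign definite: every pair with the same sign pattern yields the same signs for
all entries of `A^{d-1} B`, `d ∈ {1,…,n}`. -/
theorem ctrb_sign_definite_of_structurallyBalanced {n m : ℕ}
    (A : Matrix (Fin n) (Fin n) ℝ) (B : Matrix (Fin n) (Fin m) ℝ)
    (hbal : StructurallyBalanced A B) :
    ∀ (A' : Matrix (Fin n) (Fin n) ℝ) (B' : Matrix (Fin n) (Fin m) ℝ),
      SamePattern A A' B B' →
      ∀ (i : Fin n) (d : ℕ) (j : Fin m), 1 ≤ d → d ≤ n →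
        Real.sign ((A' ^ (d - 1) * B') i j) = Real.sign ((A ^ (d - 1) * B) i j) := by
  intro A' B' hp i d j hd _
  classical
  obtain ⟨e, rfl⟩ : ∃ e, d = e + 1 := ⟨d - 1, by omega⟩
  simp only [Nat.add_sub_cancel]
  rw [entry_eq A B j e i, entry_eq A' B' j e i]
  by_cases hex : ∃ k0 : Fin (e + 1) → Fin n, IsWalk A B j i k0
  · obtain ⟨k0, hk0⟩ := hex
    have hk0' : IsWalk A' B' j i k0 := (samePattern_isWalk hp).2 hk0
    set s := Real.sign (walkWeight A B j k0) with hsdef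
    have hs : s = 1 ∨ s = -1 :=
      (Real.sign_apply_eq_of_ne_zero _ (walkWeight_ne_zero A B hk0)).symm
    have e2 : Real.sign (∑ k : Fin (e + 1) → Fin n,
        if IsWalk A B j i k then walkWeight A B j k else 0) = s := by
      refine sign_sum_eq _ s hs (fun k => ?_) k0 ?_
      · by_cases hk : IsWalk A B j i k
        · right
          rw [if_pos hk]
          exact walk_sign_eq A B hbal hk hk0
        · left; rw [if_neg hk]
      · rw [if_pos hk0]
        exact walkWeight_ne_zero A B hk0
    have e1 : Real.sign (∑ k : Fin (e + 1) → Fin n,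
        if IsWalk A' B' j i k then walkWeight A' B' j k else 0) = s := by
      refine sign_sum_eq _ s hs (fun k => ?_) k0 ?_
      · by_cases hk : IsWalk A' B' j i k
        · right
          rw [if_pos hk, samePattern_weight hp]
          exact walk_sign_eq A B hbal ((samePattern_isWalk hp).1 hk) hk0
        · left; rw [if_neg hk]
      · rw [if_pos hk0']
        exact walkWeight_ne_zero A' B' hk0'
    rw [e1, e2]
  · have h2 : ∑ k : Fin (e + 1) → Fin n,
        (if IsWalk A B j i k then walkWeight A B j k else 0) = 0 :=
      Finset.sum_eq_zero fun k _ => if_neg fun h => hex ⟨k, h⟩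
    have h1 : ∑ k : Fin (e + 1) → Fin n,
        (if IsWalk A' B' j i k then walkWeight A' B' j k else 0) = 0 :=
      Finset.sum_eq_zero fun k _ => if_neg fun h => hex ⟨k, (samePattern_isWalk hp).1 h⟩
    rw [h1, h2]
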